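/- Let H be a finite multi-label hypothesis class over domain X and finite label set Y such that for all h, h' ∈ H and all x ∈ X, 2·|h'(x) \ h(x)| ≤ |h(x)|. Then the Set-Valued Weighted Majority Algorithm A has constant set-valued regret: for all T and all sequences (x_t, S_t)_{t=1}^T, E[∑_{t=1}^T 1[ŷ_t ∉ S_t]] − min_{h ∈ H} ∑_{t=1}^T 1[h(x_t) ≠ S_t] ≤ log₂ |H|. -/

import Mathlib

/-- The prefix of length `t` of a root-to-leaf path `σ`. -/
def pref {Y : Type} {d : ℕ} (σ : Fin d → Y) (t : Fin d) : Fin t.1 → Y :=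
  fun i => σ ⟨i.1, i.isLt.trans t.isLt⟩

variable {X Y ι : Type} [Fintype Y] [DecidableEq Y] [Fintype ι]

/-- Weights of the Set-Valued Weighted Majority Algorithm after `t` rounds, as a
(deterministic) function of the sequence of predictions `σ` made so far: on a mistake
(`σ` last ∉ `S t`) the weights of hypotheses with `h i (x t) = S t` are doubled; on a
correct prediction the weights of hypotheses with `h i (x t) ≠ S t` are halved. -/
noncomputable def wAlg (h : ι → X → Finset Y) (x : ℕ → X) (S : ℕ → Finset Y) :
    (t : ℕ) → (Fin t → Y) → ι → ℝ
  | 0, _, _ => 1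
  | t + 1, σ, i =>
      if σ (Fin.last t) ∉ S t then
        (if h i (x t) = S t then 2 * wAlg h x S t (fun j => σ j.castSucc) i
         else wAlg h x S t (fun j => σ j.castSucc) i)
      else
        (if h i (x t) = S t then wAlg h x S t (fun j => σ j.castSucc) i
         else wAlg h x S t (fun j => σ j.castSucc) i / 2)

/-- The (unnormalized) probability assigned to label `y` at round `t`. -/
noncomputable def vAlg (h : ι → X → Finset Y) (x : ℕ → X) (S : ℕ → Finset Y)
    (t : ℕ) (σ : Fin t → Y) (y : Y) : ℝ :=
  ∑ i : ι, if y ∈ h i (x t) then wAlg h x S t σ i else 0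

/-- Probability that the algorithm produces the prediction sequence `π` over `T` rounds. -/
noncomputable def probAlg (h : ι → X → Finset Y) (x : ℕ → X) (S : ℕ → Finset Y)
    (T : ℕ) (π : Fin T → Y) : ℝ :=
  ∏ t : Fin T, vAlg h x S t.1 (pref π t) (π t) / (∑ y : Y, vAlg h x S t.1 (pref π t) y)

lemma wAlg_pos (h : ι → X → Finset Y) (x : ℕ → X) (S : ℕ → Finset Y) :
    ∀ t (σ : Fin t → Y) i, 0 < wAlg h x S t σ i := by
  intro t
  induction t with
  | zero => intro σ i; simp [wAlg]
  | succ t ih =>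
    intro σ i
    rw [wAlg]
    have := ih (fun j => σ j.castSucc) i
    split <;> split <;> linarith

lemma two_mul_zpow (a b : ℤ) : 2 * (2:ℝ)^(a-b) = 2^(a+1-b) := by
  rw [show a+1-b = (a-b)+1 by ring, zpow_add_one₀ (two_ne_zero)]; ring

lemma zpow_div_two (a b : ℤ) : (2:ℝ)^(a-b)/2 = 2^(a-(b+1)) := by
  rw [show a-(b+1) = (a-b)-1 by ring, zpow_sub_one₀ (two_ne_zero)]; ring

lemma wAlg_eq (h : ι → X → Finset Y) (x : ℕ → X) (S : ℕ → Finset Y) :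
    ∀ t (σ : Fin t → Y) i, wAlg h x S t σ i =
      (2 : ℝ) ^ (((∑ j : Fin t, if σ j ∉ S j.1 then 1 else 0) -
        ∑ j : Fin t, if h i (x j.1) ≠ S j.1 then 1 else 0 : ℤ)) := by
  intro t
  induction t with
  | zero => intro σ i; simp [wAlg]
  | succ t ih =>
    intro σ i
    rw [wAlg, Fin.sum_univ_castSucc (f := fun j : Fin (t+1) => if σ j ∉ S j.1 then (1:ℤ) else 0),
      Fin.sum_univ_castSucc (f := fun j : Fin (t+1) => if h i (x j.1) ≠ S j.1 then (1:ℤ) else 0),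
      ih (fun j => σ j.castSucc) i]
    simp only [Fin.coe_castSucc, Fin.val_last]
    split <;> split <;> simp_all [two_mul_zpow, zpow_div_two]

lemma vAlg_nonneg (h : ι → X → Finset Y) (x : ℕ → X) (S : ℕ → Finset Y)
    (t : ℕ) (σ : Fin t → Y) (y : Y) : 0 ≤ vAlg h x S t σ y := by
  apply Finset.sum_nonneg
  intro i _
  split
  · exact (wAlg_pos h x S t σ i).le
  · exact le_rfl

lemma vAlg_compl_sum (h : ι → X → Finset Y) (x : ℕ → X) (S : ℕ → Finset Y)
    (t : ℕ) (σ : Fin t → Y) :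
    ∑ y ∈ (S t)ᶜ, vAlg h x S t σ y
      = ∑ i, (((h i (x t)) \ S t).card : ℝ) * wAlg h x S t σ i := by
  simp only [vAlg]
  rw [Finset.sum_comm]
  refine Finset.sum_congr rfl fun i _ => ?_
  rw [← Finset.sum_filter, Finset.filter_mem_eq_inter, Finset.sum_const, nsmul_eq_mul]
  have hset : (S t)ᶜ ∩ h i (x t) = h i (x t) \ S t := by
    ext y; simp [Finset.mem_sdiff, and_comm]
  rw [hset]

lemma vAlg_mem_sum (h : ι → X → Finset Y) (x : ℕ → X) (S : ℕ → Finset Y)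
    (t : ℕ) (σ : Fin t → Y) :
    ∑ y ∈ S t, vAlg h x S t σ y
      = ∑ i, (((S t) ∩ h i (x t)).card : ℝ) * wAlg h x S t σ i := by
  simp only [vAlg]
  rw [Finset.sum_comm]
  refine Finset.sum_congr rfl fun i _ => ?_
  rw [← Finset.sum_filter, Finset.filter_mem_eq_inter, Finset.sum_const, nsmul_eq_mul]

lemma key_step [Nonempty ι] (h : ι → X → Finset Y)
    (hcond : ∀ i j : ι, ∀ x : X, 2 * ((h j x) \ (h i x)).card ≤ (h i x).card)
    (x : ℕ → X) (S : ℕ → Finset Y) (t : ℕ) (σ : Fin t → Y) :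
    ∑ y : Y, (vAlg h x S t σ y / ∑ y', vAlg h x S t σ y') *
        (∑ i, wAlg h x S (t+1) (Fin.snoc σ y) i)
      ≤ ∑ i, wAlg h x S t σ i := by
  set w : ι → ℝ := fun i => wAlg h x S t σ i with hwdef
  have hw : ∀ i, 0 < w i := fun i => wAlg_pos h x S t σ i
  have hv : ∀ y, 0 ≤ vAlg h x S t σ y := fun y => vAlg_nonneg h x S t σ y
  set V : ℝ := ∑ y, vAlg h x S t σ y with hVdef
  set W : ℝ := ∑ i, w i with hWdef
  have hWpos : 0 < W := Finset.sum_pos (fun i _ => hw i) Finset.univ_nonempty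
  set WS : ℝ := ∑ i ∈ Finset.univ.filter (fun i => h i (x t) = S t), w i with hWSdef
  set WN : ℝ := ∑ i ∈ Finset.univ.filter (fun i => ¬ (h i (x t) = S t)), w i with hWNdef
  have hWS0 : 0 ≤ WS := Finset.sum_nonneg (fun i _ => (hw i).le)
  have hWN0 : 0 ≤ WN := Finset.sum_nonneg (fun i _ => (hw i).le)
  have hWsplit : WS + WN = W := Finset.sum_filter_add_sum_filter_not _ _ _
  have hsnoc : ∀ y : Y, (fun j : Fin t => (Fin.snoc σ y : Fin (t+1) → Y) (Fin.castSucc j)) = σ := by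
    intro y; funext j; simp
  have hW' : ∀ y : Y, (∑ i, wAlg h x S (t+1) (Fin.snoc σ y) i)
      = if y ∉ S t then W + WS else W - WN / 2 := by
    intro y
    have : ∀ i, wAlg h x S (t+1) (Fin.snoc σ y) i =
        if y ∉ S t then (if h i (x t) = S t then 2 * w i else w i)
        else (if h i (x t) = S t then w i else w i / 2) := by
      intro i
      rw [wAlg]
      simp [hsnoc y, hwdef]
    rw [Finset.sum_congr rfl (fun i _ => this i)]
    by_cases hy : y ∉ S t
    · simp only [if_pos hy]
      have : ∀ i : ι, (if h i (x t) = S t then 2 * w i else w i)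
          = w i + (if h i (x t) = S t then w i else 0) := by
        intro i; split <;> ring
      rw [Finset.sum_congr rfl (fun i _ => this i), Finset.sum_add_distrib,
        ← Finset.sum_filter]
    · simp only [if_neg hy]
      have : ∀ i : ι, (if h i (x t) = S t then w i else w i / 2)
          = w i - (if ¬ (h i (x t) = S t) then w i / 2 else 0) := by
        intro i; by_cases hc : h i (x t) = S t <;> simp [hc] <;> ring
      rw [Finset.sum_congr rfl (fun i _ => this i), Finset.sum_sub_distrib,
        ← Finset.sum_filter, ← Finset.sum_div]
  rw [Finset.sum_congr rfl (fun y _ => by rw [hW' y])]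
  by_cases hV : V = 0
  · simp only [hV, div_zero, zero_mul, Finset.sum_const, smul_zero]
    exact hWpos.le
  have hVpos : 0 < V := lt_of_le_of_ne (Finset.sum_nonneg fun y _ => hv y) (Ne.symm hV)
  have : ∀ y : Y, vAlg h x S t σ y / V * (if y ∉ S t then W + WS else W - WN / 2)
      = (vAlg h x S t σ y * (if y ∉ S t then W + WS else W - WN / 2)) / V := by
    intro y; ring
  rw [Finset.sum_congr rfl (fun y _ => this y), ← Finset.sum_div, div_le_iff₀ hVpos]
  -- split the sum over S t and its complement
  set A : ℝ := ∑ y ∈ (S t)ᶜ, vAlg h x S t σ y with hAdef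
  set B : ℝ := ∑ y ∈ S t, vAlg h x S t σ y with hBdef
  have hA0 : 0 ≤ A := Finset.sum_nonneg fun y _ => hv y
  have hB0 : 0 ≤ B := Finset.sum_nonneg fun y _ => hv y
  have hVAB : B + A = V := by
    exact Finset.sum_add_sum_compl (S t) _
  have hsum : ∑ y : Y, vAlg h x S t σ y * (if y ∉ S t then W + WS else W - WN / 2)
      = B * (W - WN / 2) + A * (W + WS) := by
    rw [← Finset.sum_add_sum_compl (S t)]
    congr 1
    · rw [Finset.sum_congr rfl (fun y hy => by
        rw [if_neg (by simpa using hy)]), ← Finset.sum_mul]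
    · rw [Finset.sum_congr rfl (fun y hy => by
        rw [if_pos (by simpa using hy)]), ← Finset.sum_mul]
  rw [hsum, ← hVAB]
  -- the crucial combinatorial inequality: 2 * A * WS ≤ B * WN
  have hA : A = ∑ i, (((h i (x t)) \ S t).card : ℝ) * w i :=
    vAlg_compl_sum h x S t σ
  have hB : B = ∑ i, (((S t) ∩ h i (x t)).card : ℝ) * w i :=
    vAlg_mem_sum h x S t σ
  have hkey : 2 * A * WS ≤ B * WN := by
    by_cases hex : ∃ i0, h i0 (x t) = S t
    · obtain ⟨i0, hi0⟩ := hex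
      have hcard : ∀ j, 2 * ((h j (x t)) \ S t).card ≤ (S t).card := fun j => by
        have := hcond i0 j (x t); rwa [hi0] at this
      have h2A : 2 * A ≤ ((S t).card : ℝ) * WN := by
        rw [hA, Finset.mul_sum,
          ← Finset.sum_filter_add_sum_filter_not Finset.univ (fun i => h i (x t) = S t)]
        have hz : ∑ i ∈ Finset.univ.filter (fun i => h i (x t) = S t),
            2 * ((((h i (x t)) \ S t).card : ℝ) * w i) = 0 := by
          refine Finset.sum_eq_zero fun i hi => ?_
          rw [Finset.mem_filter] at hi
          rw [hi.2, Finset.sdiff_self]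
          simp
        rw [hz, zero_add, hWNdef, Finset.mul_sum]
        refine Finset.sum_le_sum fun i hi => ?_
        rw [← mul_assoc]
        refine mul_le_mul_of_nonneg_right ?_ (hw i).le
        exact_mod_cast hcard i
      have hBge : ((S t).card : ℝ) * WS ≤ B := by
        rw [hB, hWSdef, Finset.mul_sum]
        have : ∀ i ∈ Finset.univ.filter (fun i => h i (x t) = S t),
            ((S t).card : ℝ) * w i = (((S t) ∩ h i (x t)).card : ℝ) * w i := by
          intro i hi
          rw [Finset.mem_filter] at hi
          rw [hi.2, Finset.inter_self]
        rw [Finset.sum_congr rfl this]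
        refine Finset.sum_le_sum_of_subset_of_nonneg (Finset.filter_subset _ _)
          fun i _ _ => mul_nonneg (Nat.cast_nonneg _) (hw i).le
      calc 2 * A * WS ≤ (((S t).card : ℝ) * WN) * WS :=
            mul_le_mul_of_nonneg_right h2A hWS0
        _ = (((S t).card : ℝ) * WS) * WN := by ring
        _ ≤ B * WN := mul_le_mul_of_nonneg_right hBge hWN0
    · have hfe : Finset.univ.filter (fun i => h i (x t) = S t) = ∅ := by
        rw [Finset.filter_eq_empty_iff]
        exact fun i _ hc => hex ⟨i, hc⟩
      have : WS = 0 := by rw [hWSdef, hfe, Finset.sum_empty]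
      rw [this, mul_zero]
      exact mul_nonneg hB0 hWN0
  nlinarith [hkey, hA0, hB0, hWS0, hWN0]

noncomputable def PAlg (h : ι → X → Finset Y) (x : ℕ → X) (S : ℕ → Finset Y)
    (t : ℕ) (σ : Fin t → Y) : ℝ :=
  ∏ j : Fin t, vAlg h x S j.1 (pref σ j) (σ j) / (∑ y : Y, vAlg h x S j.1 (pref σ j) y)

lemma probAlg_eq_PAlg (h : ι → X → Finset Y) (x : ℕ → X) (S : ℕ → Finset Y)
    (T : ℕ) (π : Fin T → Y) : probAlg h x S T π = PAlg h x S T π := rfl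

lemma pref_snoc_castSucc {d : ℕ} (σ : Fin d → Y) (y : Y) (j : Fin d) :
    pref (Fin.snoc σ y : Fin (d+1) → Y) (Fin.castSucc j) = pref σ j := by
  funext i
  exact Fin.snoc_castSucc (α := fun _ : Fin (d+1) => Y) (p := σ) (x := y) (i := ⟨i.1, i.isLt.trans j.isLt⟩)

lemma pref_snoc_last {d : ℕ} (σ : Fin d → Y) (y : Y) :
    pref (Fin.snoc σ y : Fin (d+1) → Y) (Fin.last d) = σ := by
  funext i
  exact Fin.snoc_castSucc (α := fun _ : Fin (d+1) => Y) (p := σ) (x := y) (i := ⟨i.1, i.isLt⟩)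

lemma PAlg_snoc (h : ι → X → Finset Y) (x : ℕ → X) (S : ℕ → Finset Y)
    (t : ℕ) (σ : Fin t → Y) (y : Y) :
    PAlg h x S (t+1) (Fin.snoc σ y) =
      PAlg h x S t σ * (vAlg h x S t σ y / ∑ y' : Y, vAlg h x S t σ y') := by
  rw [PAlg, Fin.prod_univ_castSucc]
  congr 1
  · refine Finset.prod_congr rfl fun j _ => ?_
    show vAlg h x S j.1 (pref (Fin.snoc σ y : Fin (t+1) → Y) j.castSucc)
        ((Fin.snoc σ y : Fin (t+1) → Y) j.castSucc) /
        (∑ y' : Y, vAlg h x S j.1 (pref (Fin.snoc σ y : Fin (t+1) → Y) j.castSucc) y') = _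
    rw [pref_snoc_castSucc, Fin.snoc_castSucc]
  · show vAlg h x S t (pref (Fin.snoc σ y : Fin (t+1) → Y) (Fin.last t))
        ((Fin.snoc σ y : Fin (t+1) → Y) (Fin.last t)) /
        (∑ y' : Y, vAlg h x S t (pref (Fin.snoc σ y : Fin (t+1) → Y) (Fin.last t)) y') = _
    rw [pref_snoc_last, Fin.snoc_last]

lemma PAlg_nonneg (h : ι → X → Finset Y) (x : ℕ → X) (S : ℕ → Finset Y)
    (t : ℕ) (σ : Fin t → Y) : 0 ≤ PAlg h x S t σ :=
  Finset.prod_nonneg fun j _ =>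
    div_nonneg (vAlg_nonneg h x S j.1 _ _)
      (Finset.sum_nonneg fun y _ => vAlg_nonneg h x S j.1 _ _)

lemma sum_snoc (t : ℕ) (f : (Fin (t+1) → Y) → ℝ) :
    ∑ π : Fin (t+1) → Y, f π = ∑ y : Y, ∑ σ : Fin t → Y, f (Fin.snoc σ y) := by
  rw [← Equiv.sum_comp (Fin.snocEquiv (fun _ => Y)) f, Fintype.sum_prod_type]
  rfl

lemma E_weight_le [Nonempty ι] (h : ι → X → Finset Y)
    (hcond : ∀ i j : ι, ∀ x : X, 2 * ((h j x) \ (h i x)).card ≤ (h i x).card)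
    (x : ℕ → X) (S : ℕ → Finset Y) :
    ∀ t : ℕ, (∑ σ : Fin t → Y, PAlg h x S t σ * ∑ i, wAlg h x S t σ i)
      ≤ Fintype.card ι := by
  intro t
  induction t with
  | zero =>
    simp [PAlg, wAlg]
  | succ t ih =>
    refine le_trans ?_ ih
    rw [sum_snoc t (fun π => PAlg h x S (t+1) π * ∑ i, wAlg h x S (t+1) π i),
      Finset.sum_comm]
    refine Finset.sum_le_sum fun σ _ => ?_
    have : ∀ y : Y, PAlg h x S (t+1) (Fin.snoc σ y) * ∑ i, wAlg h x S (t+1) (Fin.snoc σ y) i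
        = PAlg h x S t σ * ((vAlg h x S t σ y / ∑ y' : Y, vAlg h x S t σ y') *
            ∑ i, wAlg h x S (t+1) (Fin.snoc σ y) i) := by
      intro y; rw [PAlg_snoc]; ring
    rw [Finset.sum_congr rfl fun y _ => this y, ← Finset.mul_sum]
    exact mul_le_mul_of_nonneg_left (key_step h hcond x S t σ) (PAlg_nonneg h x S t σ)

lemma sum_PAlg [Nonempty ι] (h : ι → X → Finset Y) (x : ℕ → X) (S : ℕ → Finset Y) :
    ∀ t : ℕ, (∀ u, u < t → ∃ i, (h i (x u)).Nonempty) →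
      ∑ σ : Fin t → Y, PAlg h x S t σ = 1 := by
  intro t
  induction t with
  | zero => intro _; simp [PAlg]
  | succ t ih =>
    intro hgood
    rw [sum_snoc t (fun π => PAlg h x S (t+1) π), Finset.sum_comm]
    have key : ∀ σ : Fin t → Y, ∑ y : Y, PAlg h x S (t+1) (Fin.snoc σ y)
        = PAlg h x S t σ := by
      intro σ
      have hVne : (∑ y' : Y, vAlg h x S t σ y') ≠ 0 := by
        obtain ⟨i, y, hy⟩ : ∃ i y, y ∈ h i (x t) := by
          obtain ⟨i, hi⟩ := hgood t (Nat.lt_succ_self t)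
          obtain ⟨y, hy⟩ := hi
          exact ⟨i, y, hy⟩
        have hvy : 0 < vAlg h x S t σ y := by
          refine Finset.sum_pos' (fun j _ => ?_) ⟨i, Finset.mem_univ i, ?_⟩
          · split
            · exact (wAlg_pos h x S t σ j).le
            · exact le_rfl
          · rw [if_pos hy]; exact wAlg_pos h x S t σ i
        have : 0 < ∑ y' : Y, vAlg h x S t σ y' :=
          Finset.sum_pos' (fun y' _ => vAlg_nonneg h x S t σ y') ⟨y, Finset.mem_univ y, hvy⟩
        exact this.ne'
      rw [Finset.sum_congr rfl fun y _ => PAlg_snoc h x S t σ y, ← Finset.mul_sum,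
        ← Finset.sum_div, div_self hVne, mul_one]
    rw [Finset.sum_congr rfl fun σ _ => key σ]
    exact ih fun u hu => hgood u (hu.trans (Nat.lt_succ_self t))

lemma convexOn_exp_mul (c : ℝ) : ConvexOn ℝ Set.univ (fun z : ℝ => Real.exp (c * z)) := by
  constructor
  · exact convex_univ
  · intro a _ b _ μ ν hμ hν hμν
    have hh := convexOn_exp.2 (Set.mem_univ (c*a)) (Set.mem_univ (c*b)) hμ hν hμν
    simp only [smul_eq_mul] at hh ⊢
    calc Real.exp (c * (μ*a + ν*b)) = Real.exp (μ*(c*a) + ν*(c*b)) := by ring_nf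
      _ ≤ μ * Real.exp (c*a) + ν * Real.exp (c*b) := hh


/-- For any finite multi-label hypothesis class (given as an injective finite family
`h : ι → X → Finset Y`) satisfying `2|h'(x) \ h(x)| ≤ |h(x)|` for all pairs, the
Set-Valued Weighted Majority Algorithm has expected regret at most log₂ |H|. -/
theorem stmt14 [Nonempty ι] (h : ι → X → Finset Y) (hinj : Function.Injective h)
    (hcond : ∀ i j : ι, ∀ x : X, 2 * ((h j x) \ (h i x)).card ≤ (h i x).card)
    (T : ℕ) (x : ℕ → X) (S : ℕ → Finset Y) :
    (∑ π : Fin T → Y, probAlg h x S T π *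
        ∑ t : Fin T, (if π t ∉ S t.1 then (1 : ℝ) else 0))
      - Finset.univ.inf' Finset.univ_nonempty
          (fun i => ∑ t : Fin T, if h i (x t.1) ≠ S t.1 then (1 : ℝ) else 0)
      ≤ Real.logb 2 (Fintype.card ι) := by
  have hcard1 : (1 : ℝ) ≤ Fintype.card ι := by
    exact_mod_cast Fintype.card_pos
  have hlogb0 : (0:ℝ) ≤ Real.logb 2 (Fintype.card ι) :=
    Real.logb_nonneg one_lt_two hcard1
  have hinf0 : (0:ℝ) ≤ Finset.univ.inf' Finset.univ_nonempty
      (fun i => ∑ t : Fin T, if h i (x t.1) ≠ S t.1 then (1 : ℝ) else 0) := by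
    refine Finset.le_inf' _ _ fun i _ => ?_
    refine Finset.sum_nonneg fun t _ => ?_
    split <;> norm_num
  by_cases hgood : ∀ u, u < T → ∃ i, (h i (x u)).Nonempty
  · -- good case
    have hsum1 : ∑ π : Fin T → Y, PAlg h x S T π = 1 := sum_PAlg h x S T hgood
    obtain ⟨i0, -, hi0⟩ := Finset.exists_mem_eq_inf' (Finset.univ_nonempty (α := ι))
      (fun i => ∑ t : Fin T, if h i (x t.1) ≠ S t.1 then (1 : ℝ) else 0)
    rw [hi0]
    simp only [probAlg_eq_PAlg]
    set P : (Fin T → Y) → ℝ := fun π => PAlg h x S T π with hPdef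
    set mp : (Fin T → Y) → ℝ := fun π => ∑ t : Fin T, if π t ∉ S t.1 then (1:ℝ) else 0
      with hmpdef
    set mi : ℝ := ∑ t : Fin T, if h i0 (x t.1) ≠ S t.1 then (1:ℝ) else 0 with hmidef
    -- the weight of i0 at the end equals exp (log 2 * (mp π - mi))
    have hwval : ∀ π : Fin T → Y,
        Real.exp (Real.log 2 * (mp π - mi)) = wAlg h x S T π i0 := by
      intro π
      have hz := wAlg_eq h x S T π i0
      have hcast : mp π - mi =
          (((∑ j : Fin T, if π j ∉ S j.1 then 1 else 0) -
            ∑ j : Fin T, if h i0 (x j.1) ≠ S j.1 then 1 else 0 : ℤ) : ℝ) := by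
        rw [hmpdef, hmidef]
        push_cast
        rfl
      rw [hz, hcast, ← Real.rpow_intCast 2, Real.rpow_def_of_pos two_pos]
    -- expected final weight of i0 is at most the card
    have hEW : ∑ π : Fin T → Y, P π * wAlg h x S T π i0 ≤ Fintype.card ι := by
      refine le_trans (Finset.sum_le_sum fun π _ => ?_) (E_weight_le h hcond x S T)
      refine mul_le_mul_of_nonneg_left ?_ (PAlg_nonneg h x S T π)
      exact Finset.single_le_sum (fun i _ => (wAlg_pos h x S T π i).le)
        (Finset.mem_univ i0)
    -- Jensen
    have hjensen : Real.exp (Real.log 2 * (∑ π : Fin T → Y, P π • (mp π - mi)))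
        ≤ ∑ π : Fin T → Y, P π • Real.exp (Real.log 2 * (mp π - mi)) :=
      (convexOn_exp_mul (Real.log 2)).map_sum_le
        (fun π _ => PAlg_nonneg h x S T π) hsum1 (fun π _ => Set.mem_univ _)
    have hexp : Real.exp (Real.log 2 * (∑ π : Fin T → Y, P π • (mp π - mi)))
        ≤ Fintype.card ι := by
      refine hjensen.trans ?_
      refine le_trans (le_of_eq ?_) hEW
      refine Finset.sum_congr rfl fun π _ => ?_
      rw [smul_eq_mul, hwval π]
    -- take logarithms
    have hE : ∑ π : Fin T → Y, P π • (mp π - mi)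
        = (∑ π : Fin T → Y, P π * mp π) - mi := by
      simp only [smul_eq_mul, mul_sub]
      rw [Finset.sum_sub_distrib, ← Finset.sum_mul, hsum1, one_mul]
    have hlog : Real.log 2 * (∑ π : Fin T → Y, P π • (mp π - mi))
        ≤ Real.log (Fintype.card ι) := by
      have := Real.log_le_log (Real.exp_pos _) hexp
      rwa [Real.log_exp] at this
    rw [hE] at hlog
    simp only [hPdef, hmpdef] at hlog
    rw [Real.logb, le_div_iff₀ (Real.log_pos one_lt_two)]
    linarith [hlog]
  · -- degenerate case: some round has all hypotheses empty
    push_neg at hgood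
    obtain ⟨u, hu, hemp⟩ := hgood
    have hP0 : ∀ π : Fin T → Y, probAlg h x S T π = 0 := by
      intro π
      rw [probAlg]
      refine Finset.prod_eq_zero (Finset.mem_univ (⟨u, hu⟩ : Fin T)) ?_
      have hv : vAlg h x S u (pref π ⟨u, hu⟩) (π ⟨u, hu⟩) = 0 := by
        rw [vAlg]
        refine Finset.sum_eq_zero fun i _ => ?_
        rw [if_neg]
        intro hmem
        simp [hemp i] at hmem
      rw [hv, zero_div]
    rw [Finset.sum_congr rfl fun π _ => by rw [hP0 π, zero_mul], Finset.sum_const,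
      smul_zero, zero_sub]
    linarith
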